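/- For a simple rank-3 matroid M on n elements, the beta invariant satisfies β(M) ≤ β(U_{3,n}) = C(n−2, 2), where U_{3,n} is the uniform matroid of rank 3 on n elements. -/

import Mathlib

/- Chern numbers of matroids (Mannino). Background definitions. -/

open scoped Matroid
open Finset

namespace Paper

variable {α : Type*}

/-- The rank of a set in a matroid: the maximal size of an independent subset. -/
noncomputable def mrk (M : Matroid α) (X : Set α) : ℕ :=
  sSup (Set.ncard '' {I | M.Indep I ∧ I ⊆ X})

/-- A matroid is simple if it has no loops and no parallel pairs, i.e. every
subset of the ground set with at most two elements is independent. -/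
def Simple (M : Matroid α) : Prop := ∀ e ∈ M.E, ∀ f ∈ M.E, M.Indep {e, f}

/-- A matroid is loopless if every singleton of the ground set is independent. -/
def Loopless (M : Matroid α) : Prop := ∀ e ∈ M.E, M.Indep {e}

/-- A coloop is an element contained in every base. -/
def Coloop (M : Matroid α) (e : α) : Prop := e ∈ M.E ∧ ∀ B, M.IsBase B → e ∈ B

/-- `t M m` is the number of rank-2 flats of `M` of size `m`. -/
noncomputable def t (M : Matroid α) (m : ℕ) : ℕ :=
  {F : Set α | M.IsFlat F ∧ mrk M F = 2 ∧ F.ncard = m}.ncard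

/-- The first Chern number `c̄₁²` of a simple rank-3 matroid,
`9 - 5n + ∑_{m ≥ 2} (3m-4) t_m`. -/
noncomputable def c1sq (M : Matroid α) : ℤ :=
  9 - 5 * (M.E.ncard : ℤ) +
    ∑ m ∈ Finset.Icc 2 M.E.ncard, (3 * (m : ℤ) - 4) * t M m

/-- The second Chern number `c̄₂` of a simple rank-3 matroid,
`3 - 2n + ∑_{m ≥ 2} (m-1) t_m`. -/
noncomputable def c2 (M : Matroid α) : ℤ :=
  3 - 2 * (M.E.ncard : ℤ) +
    ∑ m ∈ Finset.Icc 2 M.E.ncard, ((m : ℤ) - 1) * t M m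

/-- The beta invariant of a matroid on a finite type (Crapo's formula):
`β(M) = (-1)^{r(E)} ∑_{S ⊆ E} (-1)^{|S|} r(S)`. -/
noncomputable def beta (M : Matroid α) [Fintype α] : ℤ :=
  (-1) ^ (mrk M M.E) *
    ∑ S ∈ (Set.toFinite M.E).toFinset.powerset,
      (-1 : ℤ) ^ S.card * (mrk M (S : Set α) : ℤ)

/-- `M` is the uniform matroid of rank `r` on its ground set: the independent
sets are exactly the finite subsets of the ground set of size at most `r`. -/
def IsUniform (M : Matroid α) (r : ℕ) : Prop :=
  ∀ I, I ⊆ M.E → (M.Indep I ↔ I.Finite ∧ I.ncard ≤ r)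

end Paper

open Paper

/-! ### Auxiliary lemmas -/

namespace Paper

set_option linter.unusedSectionVars false

variable [Fintype α] {M : Matroid α}

lemma mrk_bddAbove (M : Matroid α) (X : Set α) :
    BddAbove (Set.ncard '' {I | M.Indep I ∧ I ⊆ X}) := by
  refine ⟨Fintype.card α, ?_⟩
  rintro k ⟨I, -, rfl⟩
  simpa [Set.ncard_univ] using Set.ncard_le_ncard (Set.subset_univ I) (Set.toFinite _)

lemma mrk_eq_of_basis {I X : Set α} (hI : M.IsBasis I X) : mrk M X = I.ncard := by
  refine le_antisymm (csSup_le ⟨0, ∅, ⟨M.empty_indep, Set.empty_subset X⟩, by simp⟩ ?_)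
    (le_csSup (mrk_bddAbove M X) ⟨I, ⟨hI.indep, hI.subset⟩, rfl⟩)
  rintro k ⟨J, ⟨hJ, hJX⟩, rfl⟩
  obtain ⟨J', hJ', hJJ'⟩ := hJ.subset_isBasis_of_subset hJX hI.subset_ground
  calc J.ncard ≤ J'.ncard := Set.ncard_le_ncard hJJ' (Set.toFinite _)
    _ = I.ncard := by
        rw [Set.ncard_def, hJ'.encard_eq_encard hI, ← Set.ncard_def]

lemma mrk_indep {I : Set α} (hI : M.Indep I) : mrk M I = I.ncard :=
  mrk_eq_of_basis hI.isBasis_self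

lemma mrk_mono {X Y : Set α} (h : X ⊆ Y) : mrk M X ≤ mrk M Y := by
  refine csSup_le ⟨0, ∅, ⟨M.empty_indep, Set.empty_subset X⟩, by simp⟩ ?_
  rintro k ⟨J, ⟨hJ, hJX⟩, rfl⟩
  exact le_csSup (mrk_bddAbove M Y) ⟨J, ⟨hJ, hJX.trans h⟩, rfl⟩

lemma mrk_le_ncard (M : Matroid α) (X : Set α) : mrk M X ≤ X.ncard := by
  refine csSup_le ⟨0, ∅, ⟨M.empty_indep, Set.empty_subset X⟩, by simp⟩ ?_
  rintro k ⟨J, ⟨hJ, hJX⟩, rfl⟩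
  exact Set.ncard_le_ncard hJX (Set.toFinite _)

lemma mrk_closure' (M : Matroid α) (X : Set α) (hX : X ⊆ M.E) :
    mrk M (M.closure X) = mrk M X := by
  obtain ⟨I, hI⟩ := M.exists_isBasis X hX
  rw [mrk_eq_of_basis hI.isBasis_closure_right, mrk_eq_of_basis hI]

section
variable (hground : M.E = Set.univ) (hs : Simple M)
include hground hs

lemma mrk_pair {e f : α} (hef : e ≠ f) : mrk M {e, f} = 2 := by
  rw [mrk_indep (hs e (by simp [hground]) f (by simp [hground])), Set.ncard_pair hef]

lemma mrk_singleton (e : α) : mrk M {e} = 1 := by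
  have h := hs e (by simp [hground]) e (by simp [hground])
  rw [Set.pair_eq_singleton] at h
  rw [mrk_indep h, Set.ncard_singleton]

lemma two_le_mrk {X : Set α} {e f : α} (he : e ∈ X) (hf : f ∈ X) (hef : e ≠ f) :
    2 ≤ mrk M X := by
  rw [← mrk_pair hground hs hef]
  exact mrk_mono (by simp [Set.insert_subset_iff, he, hf])

/-- If `S` has rank 2 and lies in the closure of a rank-2 set `T`,
then `S` and `T` have the same closure. -/
lemma closure_eq_closure_of_rank_two {S T : Set α}
    (hS2 : mrk M S = 2) (hT2 : mrk M T = 2) (hST : S ⊆ M.closure T) :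
    M.closure S = M.closure T := by
  have hSE : S ⊆ M.E := by rw [hground]; exact Set.subset_univ S
  have hTE : T ⊆ M.E := by rw [hground]; exact Set.subset_univ T
  refine le_antisymm ?_ ?_
  · have := M.closure_mono hST
    rwa [M.closure_closure] at this
  · obtain ⟨I, hI⟩ := M.exists_isBasis S hSE
    have hIcard : I.ncard = 2 := by rw [← mrk_eq_of_basis hI, hS2]
    have hclI : M.closure I = M.closure S := hI.closure_eq_closure
    by_contra hcon
    obtain ⟨x, hxT, hxS⟩ : ∃ x ∈ M.closure T, x ∉ M.closure S := by
      by_contra h; push_neg at h; exact hcon (fun x hx => h x hx)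
    have hxI : x ∉ M.closure I := by rwa [hclI]
    have hxE : x ∈ M.E := M.closure_subset_ground T hxT
    have hxnotI : x ∉ I := fun h => hxI (M.subset_closure I hI.indep.subset_ground h)
    have hins : M.Indep (insert x I) := by
      rw [hI.indep.insert_indep_iff_of_notMem hxnotI]
      exact ⟨hxE, hxI⟩
    have h3 : mrk M (insert x I) = 3 := by
      rw [mrk_indep hins, Set.ncard_insert_of_notMem hxnotI (Set.toFinite _), hIcard]
    have hsub : insert x I ⊆ M.closure T :=
      Set.insert_subset hxT (hI.subset.trans hST)
    have := (mrk_mono (M := M) hsub).trans_eq (by rw [mrk_closure' M T hTE, hT2])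
    omega

end
end Paper

/-- Generic split of a powerset sum by cardinality `0 / 1 / ≥ 2`. -/
lemma sum_split_card {γ : Type*} [DecidableEq γ] (L : Finset γ) (F : Finset γ → ℤ) :
    ∑ S ∈ L.powerset, F S =
      F ∅ + (∑ S ∈ Finset.powersetCard 1 L, F S) +
        ∑ S ∈ L.powerset.filter (fun S => 2 ≤ S.card), F S := by
  rw [← Finset.sum_filter_add_sum_filter_not L.powerset (fun S => 2 ≤ S.card) F]
  have h0 : (L.powerset.filter (fun S => ¬ 2 ≤ S.card)).filter (fun S => S.card = 0) = {∅} := by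
    ext S
    simp only [Finset.mem_filter, Finset.mem_powerset, Finset.mem_singleton, Finset.card_eq_zero]
    constructor
    · rintro ⟨⟨-, -⟩, h⟩; exact h
    · rintro rfl; simp
  have h1 : (L.powerset.filter (fun S => ¬ 2 ≤ S.card)).filter (fun S => ¬ S.card = 0) =
      Finset.powersetCard 1 L := by
    ext S
    simp only [Finset.mem_filter, Finset.mem_powerset, Finset.mem_powersetCard]
    constructor
    · rintro ⟨⟨hSL, h2⟩, h0⟩; exact ⟨hSL, by omega⟩
    · rintro ⟨hSL, h1⟩; exact ⟨⟨hSL, by omega⟩, by omega⟩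
  have := Finset.sum_filter_add_sum_filter_not
    (L.powerset.filter (fun S => ¬ 2 ≤ S.card)) (fun S => S.card = 0) F
  rw [h0, h1, Finset.sum_singleton] at this
  linarith

lemma aux_line_sum {γ : Type*} [DecidableEq γ] (L : Finset γ) (hL : L ≠ ∅) :
    ∑ S ∈ L.powerset.filter (fun S => 2 ≤ S.card), (-1 : ℤ) ^ S.card = L.card - 1 := by
  have h0 : ∑ S ∈ L.powerset, (-1 : ℤ) ^ S.card = 0 := by
    rw [Finset.sum_powerset_neg_one_pow_card, if_neg hL]
  have hs := sum_split_card L (fun S => (-1 : ℤ) ^ S.card)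
  rw [h0] at hs
  have h1 : ∑ S ∈ Finset.powersetCard 1 L, (-1 : ℤ) ^ S.card = -(L.card : ℤ) := by
    rw [Finset.sum_congr rfl (fun S hS => by
      rw [(Finset.mem_powersetCard.1 hS).2, pow_one])]
    simp [Finset.card_powersetCard]
  rw [h1] at hs
  simp only [Finset.card_empty, pow_zero] at hs
  linarith

lemma aux_choose_two (m : ℕ) (hm : 2 ≤ m) : m - 1 ≤ m.choose 2 := by
  obtain ⟨k, rfl⟩ : ∃ k, m = k + 2 := ⟨m - 2, by omega⟩
  rw [Nat.choose_succ_succ]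
  have : (k+1).choose 1 = k + 1 := Nat.choose_one_right _
  omega

lemma aux_choose_id (n : ℕ) (hn : 3 ≤ n) : n.choose 2 + 3 = (n-2).choose 2 + 2 * n := by
  obtain ⟨m, rfl⟩ : ∃ m, n = m + 3 := ⟨n - 3, by omega⟩
  have h1 : (m+3).choose 2 = (m+2).choose 1 + (m+2).choose 2 := Nat.choose_succ_succ _ _
  have h2 : (m+2).choose 2 = (m+1).choose 1 + (m+1).choose 2 := Nat.choose_succ_succ _ _
  have h3 : (m+2).choose 1 = m + 2 := Nat.choose_one_right _
  have h4 : (m+1).choose 1 = m + 1 := Nat.choose_one_right _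
  rw [show m + 3 - 2 = m + 1 from by omega]
  omega

/-- Brylawski's inequality in rank 3: for a simple rank-3 matroid on `n` elements,
`β(M) ≤ β(U_{3,n}) = C(n-2, 2)`. -/
theorem stmt_7 {α : Type*} [Fintype α] (M : Matroid α) (n : ℕ)
    (hground : M.E = Set.univ) (hn : M.E.ncard = n)
    (hs : Simple M) (hr : mrk M M.E = 3) :
    beta M ≤ ((n - 2).choose 2 : ℤ) := by
  classical
  have hE : ∀ X : Set α, X ⊆ M.E := fun X => by rw [hground]; exact Set.subset_univ X
  have hcard : (Finset.univ : Finset α).card = n := by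
    have h1 : M.E.ncard = Fintype.card α := by
      rw [hground, Set.ncard_univ, Nat.card_eq_fintype_card]
    rw [Finset.card_univ, ← h1, hn]
  -- n ≥ 3
  obtain ⟨B, hB⟩ := M.exists_isBasis M.E Set.Subset.rfl
  have hB3 : B.ncard = 3 := by rw [← mrk_eq_of_basis hB, hr]
  have hn3 : 3 ≤ n := by
    calc 3 = B.ncard := hB3.symm
      _ ≤ M.E.ncard := Set.ncard_le_ncard hB.indep.subset_ground (Set.toFinite _)
      _ = n := hn
  -- rank facts for finsets
  have hr3 : ∀ S : Finset α, mrk M ↑S ≤ 3 := fun S => by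
    have h := mrk_mono (M := M) (hE (↑S : Set α))
    rwa [hr] at h
  have hrpair : ∀ S : Finset α, S.card = 2 → mrk M ↑S = 2 := by
    intro S hS
    obtain ⟨a, b, hab, rfl⟩ := Finset.card_eq_two.1 hS
    have hco : (↑({a, b} : Finset α) : Set α) = {a, b} := by simp
    rw [hco, mrk_pair hground hs hab]
  have hrlow : ∀ S : Finset α, 2 ≤ S.card → 2 ≤ mrk M ↑S := by
    intro S hS
    obtain ⟨a, ha, b, hb, hab⟩ := Finset.one_lt_card.1 (show 1 < S.card by omega)
    exact two_le_mrk hground hs (X := (↑S : Set α))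
      (by exact_mod_cast ha) (by exact_mod_cast hb) hab
  have hrempty : mrk M ((↑(∅ : Finset α)) : Set α) = 0 := by
    rw [Finset.coe_empty, mrk_indep M.empty_indep, Set.ncard_empty]
  -- unfold beta
  have hPE : (Set.toFinite M.E).toFinset = (Finset.univ : Finset α) := by
    ext x; simp [Set.Finite.mem_toFinset, hground]
  rw [beta, hr, hPE]
  -- the set family of rank-2 subsets of size ≥ 2
  set P2 : Finset (Finset α) :=
    (Finset.univ : Finset α).powerset.filter (fun S => 2 ≤ S.card) with hP2
  set Sc : Finset (Finset α) := P2.filter (fun S => mrk M ↑S = 2) with hSc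
  have hS_mem : ∀ S : Finset α, S ∈ Sc ↔ (2 ≤ S.card ∧ mrk M ↑S = 2) := by
    intro S
    constructor
    · intro h
      have h1 := Finset.mem_filter.1 h
      have h2 := Finset.mem_filter.1 h1.1
      exact ⟨h2.2, h1.2⟩
    · intro h
      exact Finset.mem_filter.2 ⟨Finset.mem_filter.2
        ⟨Finset.mem_powerset.2 (Finset.subset_univ S), h.1⟩, h.2⟩
  -- rewrite beta as 3 - 2n + Σ₂
  have hzero : ∑ S ∈ (Finset.univ : Finset α).powerset, (-1 : ℤ) ^ S.card = 0 := by
    rw [Finset.sum_powerset_neg_one_pow_card, if_neg]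
    intro h
    rw [h, Finset.card_empty] at hcard
    omega
  have hbeta :
      (-1 : ℤ) ^ 3 * ∑ S ∈ (Finset.univ : Finset α).powerset,
          (-1 : ℤ) ^ S.card * (mrk M ↑S : ℤ)
        = ∑ S ∈ (Finset.univ : Finset α).powerset,
            (-1 : ℤ) ^ S.card * (3 - (mrk M ↑S : ℤ)) := by
    have h1 : ∑ S ∈ (Finset.univ : Finset α).powerset, (-1 : ℤ) ^ S.card * (mrk M ↑S : ℤ)
        = 3 * ∑ S ∈ (Finset.univ : Finset α).powerset, (-1 : ℤ) ^ S.card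
          - ∑ S ∈ (Finset.univ : Finset α).powerset,
              (-1 : ℤ) ^ S.card * (3 - (mrk M ↑S : ℤ)) := by
      rw [Finset.mul_sum, ← Finset.sum_sub_distrib]
      exact Finset.sum_congr rfl fun S _ => by ring
    rw [h1, hzero]; ring
  rw [hbeta]
  -- split the sum
  rw [sum_split_card (Finset.univ : Finset α) (fun S => (-1 : ℤ) ^ S.card * (3 - (mrk M ↑S : ℤ)))]
  have hF0 : (-1 : ℤ) ^ (∅ : Finset α).card * (3 - (mrk M ↑(∅ : Finset α) : ℤ)) = 3 := by
    rw [hrempty]; simp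
  have hone : ∑ S ∈ Finset.powersetCard 1 (Finset.univ : Finset α),
      (-1 : ℤ) ^ S.card * (3 - (mrk M ↑S : ℤ)) = -2 * n := by
    have hc : ∀ S ∈ Finset.powersetCard 1 (Finset.univ : Finset α),
        (-1 : ℤ) ^ S.card * (3 - (mrk M ↑S : ℤ)) = -2 := by
      intro S hS
      obtain ⟨-, hc⟩ := Finset.mem_powersetCard.1 hS
      obtain ⟨a, rfl⟩ := Finset.card_eq_one.1 hc
      have hra : mrk M ↑({a} : Finset α) = 1 := by
        rw [Finset.coe_singleton, mrk_singleton hground hs a]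
      rw [hra]; simp
    rw [Finset.sum_congr rfl hc, Finset.sum_const, Finset.card_powersetCard, hcard,
      Nat.choose_one_right, nsmul_eq_mul]
    ring
  have hpart3 : ∑ S ∈ P2, (-1 : ℤ) ^ S.card * (3 - (mrk M ↑S : ℤ))
      = ∑ S ∈ Sc, (-1 : ℤ) ^ S.card := by
    have hsf := Finset.sum_filter (s := P2)
      (fun S : Finset α => mrk M (↑S : Set α) = 2) (fun S : Finset α => (-1 : ℤ) ^ S.card)
    rw [hSc, hsf]
    refine Finset.sum_congr rfl fun S hS => ?_
    have h2 : 2 ≤ S.card := (Finset.mem_filter.1 hS).2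
    by_cases h : mrk M ↑S = 2
    · rw [if_pos h, h]; push_cast; ring
    · have h3 : mrk M ↑S = 3 := le_antisymm (hr3 S) (by have := hrlow S h2; omega)
      rw [if_neg h, h3]; push_cast; ring
  rw [hF0, hone, hpart3]
  -- fibering over lines
  set clF : Finset α → Finset α :=
    fun S => (Set.toFinite (M.closure (↑S : Set α))).toFinset with hclF
  set T : Finset (Finset α) := Sc.image clF with hT
  have hmapsto : ∀ S ∈ Sc, clF S ∈ T := fun S hS => Finset.mem_image_of_mem _ hS
  have hsubcl : ∀ S : Finset α, S ⊆ clF S := by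
    intro S x hx
    rw [hclF]
    simp only [Set.Finite.mem_toFinset]
    exact M.subset_closure (↑S) (hE _) (by exact_mod_cast hx)
  have key : ∀ L ∈ T, ∀ S : Finset α, (S ∈ Sc ∧ clF S = L) ↔ (S ⊆ L ∧ 2 ≤ S.card) := by
    intro L hL S
    obtain ⟨S₀, hS₀, rfl⟩ := Finset.mem_image.1 hL
    obtain ⟨hS₀c, hS₀r⟩ := (hS_mem S₀).1 hS₀
    constructor
    · rintro ⟨hSmem, hEq⟩
      rw [← hEq]
      exact ⟨hsubcl S, ((hS_mem S).1 hSmem).1⟩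
    · rintro ⟨hSL, hScard⟩
      have hcoe : (↑S : Set α) ⊆ M.closure (↑S₀ : Set α) := by
        intro x hx
        have hx' : x ∈ clF S₀ := hSL (by exact_mod_cast hx)
        rw [hclF] at hx'
        simpa only [Set.Finite.mem_toFinset] using hx'
      have hrS : mrk M ↑S = 2 := by
        refine le_antisymm ?_ (hrlow S hScard)
        have h1 : mrk M ↑S ≤ mrk M (M.closure ↑S₀) := mrk_mono hcoe
        rwa [mrk_closure' M ↑S₀ (hE _), hS₀r] at h1
      refine ⟨(hS_mem S).2 ⟨hScard, hrS⟩, ?_⟩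
      have hcl := closure_eq_closure_of_rank_two hground hs hrS hS₀r hcoe
      rw [hclF]
      ext x
      simp only [Set.Finite.mem_toFinset]
      rw [hcl]
  have hLcard : ∀ L ∈ T, 2 ≤ L.card := by
    intro L hL
    obtain ⟨S₀, hS₀, rfl⟩ := Finset.mem_image.1 hL
    have := Finset.card_le_card (hsubcl S₀)
    have h2 := ((hS_mem S₀).1 hS₀).1
    omega
  have hfiber : ∀ L ∈ T, Sc.filter (fun S => clF S = L)
      = L.powerset.filter (fun S => 2 ≤ S.card) := by
    intro L hL
    ext S
    constructor
    · intro h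
      have h1 := Finset.mem_filter.1 h
      obtain ⟨h2, h3⟩ := (key L hL S).1 ⟨h1.1, h1.2⟩
      exact Finset.mem_filter.2 ⟨Finset.mem_powerset.2 h2, h3⟩
    · intro h
      have h1 := Finset.mem_filter.1 h
      obtain ⟨h2, h3⟩ := (key L hL S).2 ⟨Finset.mem_powerset.1 h1.1, h1.2⟩
      exact Finset.mem_filter.2 ⟨h2, h3⟩
  -- pairs
  set Pr : Finset (Finset α) := Sc.filter (fun S => S.card = 2) with hPr
  have hPrcard : Pr.card = n.choose 2 := by
    have hPreq : Pr = Finset.powersetCard 2 (Finset.univ : Finset α) := by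
      ext S
      constructor
      · intro h
        exact Finset.mem_powersetCard.2
          ⟨Finset.subset_univ S, (Finset.mem_filter.1 h).2⟩
      · intro h
        have hc := (Finset.mem_powersetCard.1 h).2
        exact Finset.mem_filter.2 ⟨(hS_mem S).2 ⟨by omega, hrpair S hc⟩, hc⟩
    rw [hPreq, Finset.card_powersetCard, hcard]
  have hpairfiber : ∀ L ∈ T, Pr.filter (fun S => clF S = L) = Finset.powersetCard 2 L := by
    intro L hL
    ext S
    constructor
    · intro h
      have hPm := Finset.mem_filter.1 h
      have hPr2 := Finset.mem_filter.1 hPm.1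
      exact Finset.mem_powersetCard.2
        ⟨((key L hL S).1 ⟨hPr2.1, hPm.2⟩).1, hPr2.2⟩
    · intro h
      obtain ⟨hSL, hc⟩ := Finset.mem_powersetCard.1 h
      obtain ⟨hSmem, hcl⟩ := (key L hL S).2 ⟨hSL, by omega⟩
      exact Finset.mem_filter.2 ⟨Finset.mem_filter.2 ⟨hSmem, hc⟩, hcl⟩
  -- the two fiberwise sums
  have hSig : ∑ S ∈ Sc, (-1 : ℤ) ^ S.card = ∑ L ∈ T, ((L.card : ℤ) - 1) := by
    rw [← Finset.sum_fiberwise_of_maps_to hmapsto (fun S => (-1 : ℤ) ^ S.card)]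
    refine Finset.sum_congr rfl fun L hL => ?_
    rw [hfiber L hL, aux_line_sum L (by
      intro h
      have := hLcard L hL
      rw [h, Finset.card_empty] at this
      omega)]
  have hcount : (n.choose 2 : ℤ) = ∑ L ∈ T, ((L.card.choose 2 : ℕ) : ℤ) := by
    have h1 : Pr.card = ∑ L ∈ T, (Pr.filter (fun S => clF S = L)).card :=
      Finset.card_eq_sum_card_fiberwise
        (fun S hS => hmapsto S (Finset.mem_filter.1 hS).1)
    have h2 : Pr.card = ∑ L ∈ T, (L.card.choose 2) := by
      rw [h1]
      exact Finset.sum_congr rfl fun L hL => by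
        rw [hpairfiber L hL, Finset.card_powersetCard]
    rw [← hPrcard, h2]
    push_cast
    rfl
  have hineq : ∑ S ∈ Sc, (-1 : ℤ) ^ S.card ≤ (n.choose 2 : ℤ) := by
    rw [hSig, hcount]
    refine Finset.sum_le_sum fun L hL => ?_
    have h2 := hLcard L hL
    have h3 := aux_choose_two L.card h2
    omega
  -- final arithmetic
  have hid := aux_choose_id n hn3
  have hfin : ((n - 2).choose 2 : ℤ) = (n.choose 2 : ℤ) + 3 - 2 * n := by
    have : ((n.choose 2 : ℕ) : ℤ) + 3 = (((n - 2).choose 2 : ℕ) : ℤ) + 2 * n := by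
      exact_mod_cast congrArg (Nat.cast : ℕ → ℤ) hid
    omega
  rw [hfin]
  linarith
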